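/- Let E be a real inner product space, let k be a natural number, and let p : Fin (k+1) → E be a (k+1)-tuple of points of E. Define W(p) to be the determinant of the k×k matrix whose (i,j) entry is ⟪p (i+1) − p 0, p (j+1) − p 0⟫. Then W is symmetric in the k+1 points: for every permutation σ of Fin (k+1), W(p ∘ σ) = W(p). -/

import Mathlib

open RealInnerProductSpace

section BasedGramAux

variable {E : Type*} [NormedAddCommGroup E] [InnerProductSpace ℝ E]

private lemma gram_transform {k : ℕ} (v : Fin k → E) (A : Matrix (Fin k) (Fin k) ℝ) :
    (Matrix.of fun i j : Fin k =>
        (inner ℝ (∑ l, A i l • v l) (∑ m, A j m • v m) : ℝ)) =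
      A * (Matrix.of fun i j : Fin k => (inner ℝ (v i) (v j) : ℝ)) * Matrix.transpose A := by
  ext i j
  simp only [Matrix.of_apply, Matrix.mul_apply, Matrix.transpose_apply, sum_inner, inner_sum,
    real_inner_smul_left, real_inner_smul_right, Finset.sum_mul, Finset.mul_sum]
  refine Finset.sum_congr rfl fun m _ => Finset.sum_congr rfl fun l _ => ?_
  ring

/-- Coefficient matrix expressing the based difference vectors after swapping the base point
`p 0` with `p t.succ`, in terms of the original difference vectors. -/
private def swapMat {k : ℕ} (t : Fin k) : Matrix (Fin k) (Fin k) ℝ :=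
  Matrix.of fun i j =>
    (if i = t then 0 else if i = j then 1 else 0) - (if j = t then 1 else 0)

private lemma swapMat_mul_self {k : ℕ} (t : Fin k) : swapMat t * swapMat t = 1 := by
  ext i j
  rw [Matrix.mul_apply]
  by_cases hi : i = t
  · subst hi
    have h : ∀ l : Fin k, swapMat i i l * swapMat i l j
        = if l = i then (if j = i then (1:ℝ) else 0) else 0 := by
      intro l
      simp only [swapMat, Matrix.of_apply]
      split_ifs <;> subst_vars <;> (first | ring1 | simp_all)
    rw [Finset.sum_congr rfl fun l _ => h l, Finset.sum_ite_eq' Finset.univ i _]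
    simp [Matrix.one_apply, eq_comm]
  · have h : ∀ l : Fin k, swapMat t i l * swapMat t l j
        = (if l = i then swapMat t l j else 0) - (if l = t then swapMat t l j else 0) := by
      intro l
      simp only [swapMat, Matrix.of_apply, if_neg hi]
      split_ifs <;> subst_vars <;> (first | ring1 | simp_all)
    rw [Finset.sum_congr rfl fun l _ => h l, Finset.sum_sub_distrib,
      Finset.sum_ite_eq' Finset.univ i _, Finset.sum_ite_eq' Finset.univ t _]
    simp only [Finset.mem_univ, if_true, swapMat, Matrix.of_apply, Matrix.one_apply, if_neg hi]
    split_ifs <;> simp_all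

private lemma det_gram_swap {k : ℕ} (p : Fin (k + 1) → E) (t : Fin k) :
    Matrix.det (Matrix.of fun i j : Fin k =>
        ⟪(p ∘ Equiv.swap 0 t.succ) i.succ - (p ∘ Equiv.swap 0 t.succ) 0,
          (p ∘ Equiv.swap 0 t.succ) j.succ - (p ∘ Equiv.swap 0 t.succ) 0⟫) =
      Matrix.det (Matrix.of fun i j : Fin k =>
        ⟪p i.succ - p 0, p j.succ - p 0⟫) := by
  set v : Fin k → E := fun j => p j.succ - p 0 with hv
  have hw : ∀ i : Fin k, (p ∘ Equiv.swap 0 t.succ) i.succ - (p ∘ Equiv.swap 0 t.succ) 0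
      = ∑ l, swapMat t i l • v l := by
    intro i
    have hsum : (∑ l, swapMat t i l • v l)
        = (if i = t then 0 else v i) - v t := by
      simp only [swapMat, Matrix.of_apply, sub_smul, Finset.sum_sub_distrib,
        ite_smul, one_smul, zero_smul]
      rcases eq_or_ne i t with rfl | hi
      · simp
      · simp [hi, Finset.sum_ite_eq' Finset.univ i v]
    rw [hsum]
    simp only [Function.comp_apply, Equiv.swap_apply_left]
    rcases eq_or_ne i t with rfl | hi
    · rw [Equiv.swap_apply_right]
      simp [hv]
    · rw [Equiv.swap_apply_of_ne_of_ne (Fin.succ_ne_zero i)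
        (fun h => hi (Fin.succ_injective _ h))]
      rw [if_neg hi]
      simp only [hv]
      abel
  have key : (Matrix.of fun i j : Fin k =>
      ⟪(p ∘ Equiv.swap 0 t.succ) i.succ - (p ∘ Equiv.swap 0 t.succ) 0,
        (p ∘ Equiv.swap 0 t.succ) j.succ - (p ∘ Equiv.swap 0 t.succ) 0⟫)
      = swapMat t * (Matrix.of fun i j : Fin k => (inner ℝ (v i) (v j) : ℝ))
          * Matrix.transpose (swapMat t) := by
    rw [← gram_transform]
    ext i j
    rw [Matrix.of_apply, Matrix.of_apply, hw, hw]
  rw [key, Matrix.det_mul, Matrix.det_mul, Matrix.det_transpose,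
    mul_comm, ← mul_assoc, ← Matrix.det_mul, swapMat_mul_self, Matrix.det_one, one_mul]

end BasedGramAux

theorem based_gram_det_perm_invariant {E : Type*} [NormedAddCommGroup E]
    [InnerProductSpace ℝ E] (k : ℕ) (p : Fin (k + 1) → E)
    (σ : Equiv.Perm (Fin (k + 1))) :
    Matrix.det (Matrix.of fun i j : Fin k =>
        ⟪(p ∘ σ) i.succ - (p ∘ σ) 0, (p ∘ σ) j.succ - (p ∘ σ) 0⟫) =
      Matrix.det (Matrix.of fun i j : Fin k =>
        ⟪p i.succ - p 0, p j.succ - p 0⟫) := by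
  obtain ⟨⟨a, e⟩, rfl⟩ : ∃ x, Equiv.Perm.decomposeFin.symm x = σ :=
    ⟨Equiv.Perm.decomposeFin σ, Equiv.symm_apply_apply _ _⟩
  set q : Fin (k + 1) → E := p ∘ Equiv.swap 0 a with hq
  have h1 : (Matrix.of fun i j : Fin k =>
      ⟪(p ∘ Equiv.Perm.decomposeFin.symm (a, e)) i.succ
          - (p ∘ Equiv.Perm.decomposeFin.symm (a, e)) 0,
        (p ∘ Equiv.Perm.decomposeFin.symm (a, e)) j.succ
          - (p ∘ Equiv.Perm.decomposeFin.symm (a, e)) 0⟫)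
      = (Matrix.of fun i j : Fin k => ⟪q i.succ - q 0, q j.succ - q 0⟫).submatrix e e := by
    ext i j
    simp [hq, Equiv.swap_apply_left]
  rw [h1, Matrix.det_submatrix_equiv_self]
  rcases Fin.eq_zero_or_eq_succ a with rfl | ⟨t, rfl⟩
  · have hqp : q = p := by ext x; simp [hq, Equiv.swap_self]
    rw [hqp]
  · exact det_gram_swap p t
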